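/- Let F be a totally real field, E ⊆ F a subfield, Σ_F the real embeddings of F, and k : Σ_F → ℤ a weight. There exists t : Σ_F → ℝ such that k_σ + 2t_σ = R is independent of σ and such that for every real embedding τ of E, the sum Σ_{σ|τ} (t_σ − ½) is an integer, if and only if k is E-paritious, i.e. the parity of Σ_{σ|τ} k_σ is independent of τ. -/

import Mathlib

open NumberField Finset

lemma sum_shift_aux {α : Type*} (s : Finset α) (t : α → ℝ) (k : α → ℤ) (R : ℝ)
    (hR : ∀ σ, (k σ : ℝ) + 2 * t σ = R) :
    ∑ σ ∈ s, (t σ - 1 / 2)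
      = (s.card : ℝ) * ((R - 1) / 2) - ((∑ σ ∈ s, k σ : ℤ) : ℝ) / 2 := by
  have h : ∀ σ ∈ s, t σ - 1 / 2 = (R - 1) / 2 - (k σ : ℝ) / 2 :=
    fun σ _ => by linarith [hR σ]
  rw [Finset.sum_congr rfl h, Finset.sum_sub_distrib, Finset.sum_const, nsmul_eq_mul]
  congr 1
  push_cast
  rw [Finset.sum_div]

/-- For a totally real extension `F/E` and a weight `k : Σ_F → ℤ`:
there exists `t : Σ_F → ℝ` with `k_σ + 2t_σ = R` independent of `σ` and with
`Σ_{σ∣τ}(t_σ − ½) ∈ ℤ` for every real embedding `τ` of `E`, if and only if `k` is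
`E`-paritious, i.e. the parity of `Σ_{σ∣τ} k_σ` is independent of `τ`.
(`σ ∣ τ` means the real embedding `σ` of `F` restricts to `τ` on `E`; each fibre has
exactly `[F : E]` elements.) -/
theorem reasonable_t_iff_E_paritious
    (E F : Type*) [Field E] [Field F] [NumberField E] [NumberField F] [Algebra E F]
    [Fintype (F →+* ℝ)] [DecidableEq (E →+* ℝ)]
    (htotrealF : ∀ φ : F →+* ℂ, ComplexEmbedding.IsReal φ)
    (htotrealE : ∀ φ : E →+* ℂ, ComplexEmbedding.IsReal φ)
    (hfib : ∀ τ : E →+* ℝ,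
      (univ.filter fun σ : F →+* ℝ => σ.comp (algebraMap E F) = τ).card
        = Module.finrank E F)
    (k : (F →+* ℝ) → ℤ) :
    (∃ t : (F →+* ℝ) → ℝ, ∃ R : ℝ,
        (∀ σ, (k σ : ℝ) + 2 * t σ = R) ∧
        ∀ τ : E →+* ℝ, ∃ n : ℤ,
          (∑ σ ∈ univ.filter fun σ : F →+* ℝ => σ.comp (algebraMap E F) = τ,
            (t σ - 1 / 2)) = (n : ℝ))
      ↔ ∀ τ τ' : E →+* ℝ,
          (∑ σ ∈ univ.filter fun σ : F →+* ℝ => σ.comp (algebraMap E F) = τ, k σ) % 2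
            = (∑ σ ∈ univ.filter fun σ : F →+* ℝ => σ.comp (algebraMap E F) = τ', k σ) % 2 := by
  constructor
  · rintro ⟨t, R, hR, hint⟩ τ τ'
    obtain ⟨n, hn⟩ := hint τ
    obtain ⟨n', hn'⟩ := hint τ'
    rw [sum_shift_aux _ t k R hR, hfib] at hn hn'
    set S := ∑ σ ∈ univ.filter fun σ : F →+* ℝ => σ.comp (algebraMap E F) = τ, k σ
    set S' := ∑ σ ∈ univ.filter fun σ : F →+* ℝ => σ.comp (algebraMap E F) = τ', k σ
    have hreal : (S : ℝ) - S' = 2 * (n' - n) := by linarith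
    have hint' : S - S' = 2 * (n' - n) := by exact_mod_cast hreal
    omega
  · intro hpar
    cases isEmpty_or_nonempty (E →+* ℝ) with
    | inl h =>
      exact ⟨fun σ => -(k σ) / 2, 0, fun σ => by push_cast; ring, fun τ => h.elim τ⟩
    | inr h =>
      obtain ⟨τ₀⟩ := h
      by_cases hd : Module.finrank E F = 0
      · refine ⟨fun σ => -(k σ) / 2, 0, fun σ => by push_cast; ring, fun τ => ⟨0, ?_⟩⟩
        have hc : (univ.filter fun σ : F →+* ℝ => σ.comp (algebraMap E F) = τ).card = 0 := by
          rw [hfib]; exact hd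
        rw [Finset.card_eq_zero.mp hc]
        simp
      · set d : ℝ := (Module.finrank E F : ℝ) with hd'
        have hdne : d ≠ 0 := Nat.cast_ne_zero.mpr hd
        set S₀ := ∑ σ ∈ univ.filter fun σ : F →+* ℝ => σ.comp (algebraMap E F) = τ₀, k σ
        refine ⟨fun σ => ((1 + S₀ / d) - k σ) / 2, 1 + S₀ / d, fun σ => by ring, fun τ => ?_⟩
        set S := ∑ σ ∈ univ.filter fun σ : F →+* ℝ => σ.comp (algebraMap E F) = τ, k σ with hS
        have hp := hpar τ₀ τ
        obtain ⟨m, hm⟩ : ∃ m : ℤ, S₀ - S = 2 * m := ⟨(S₀ - S) / 2, by omega⟩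
        refine ⟨m, ?_⟩
        rw [sum_shift_aux _ _ k (1 + S₀ / d) (fun σ => by ring), hfib, ← hS, ← hd']
        have : ((S₀ : ℝ) - S) = 2 * m := by exact_mod_cast hm
        have hsimp : d * ((1 + (S₀ : ℝ) / d - 1) / 2) = (S₀ : ℝ) / 2 := by
          field_simp; ring
        linarith
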